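/- Define the modulus of continuity ω(ε) := sup{ |θ₁ − θ₂|/σ : θ₁, θ₂ ∈ ℝ, σ > 0, dTV(N(θ₁, σ²), N(θ₂, σ²)) ≤ ε/(1−ε) }. Then for every ε ∈ [1/3, 1/2) (equivalently, whenever 2(1−2ε) ≤ 1−ε and ε < 1/2), ω(ε) ≥ √( 2·log( (1−ε)/(2(1−2ε)) ) ). -/
import Mathlib


open MeasureTheory ProbabilityTheory
open Real Set
open scoped NNReal

lemma gauss_toReal (μ : ℝ) {v : ℝ≥0} (hv : v ≠ 0) (s : Set ℝ) :
    ((gaussianReal μ v) s).toReal = ∫ x in s, gaussianPDFReal μ v x := by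
  rw [gaussianReal_apply_eq_integral μ hv s,
    ENNReal.toReal_ofReal (integral_nonneg fun x => gaussianPDFReal_nonneg μ v x)]

lemma shift_Ioi (a : ℝ) (f : ℝ → ℝ) :
    ∫ u in Ioi a, f (u - a) = ∫ u in Ioi (0:ℝ), f u := by
  rw [← integral_indicator measurableSet_Ioi, ← integral_indicator measurableSet_Ioi]
  have h : (Ioi a).indicator (fun u => f (u - a)) = fun u => (Ioi (0:ℝ)).indicator f (u - a) := by
    ext u
    simp only [Set.indicator, mem_Ioi]
    by_cases h : a < u
    · rw [if_pos h, if_pos (by linarith)]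
    · rw [if_neg h, if_neg (by intro hh; exact h (by linarith))]
  rw [h, integral_sub_right_eq_self (fun u => (Ioi (0:ℝ)).indicator f u) a]

lemma shift_Iic (a : ℝ) (f : ℝ → ℝ) :
    ∫ u in Iic a, f (u - a) = ∫ u in Iic (0:ℝ), f u := by
  rw [← integral_indicator measurableSet_Iic, ← integral_indicator measurableSet_Iic]
  have h : (Iic a).indicator (fun u => f (u - a)) = fun u => (Iic (0:ℝ)).indicator f (u - a) := by
    ext u
    simp only [Set.indicator, mem_Iic]
    by_cases h : u ≤ a
    · rw [if_pos h, if_pos (by linarith)]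
    · rw [if_neg h, if_neg (by intro hh; exact h (by linarith))]
  rw [h, integral_sub_right_eq_self (fun u => (Iic (0:ℝ)).indicator f u) a]

lemma half_gauss_Ioi (a : ℝ) : ∫ u in Ioi a, Real.exp (-2 * (u - a)^2) = √(π/2)/2 := by
  rw [shift_Ioi a (fun u => Real.exp (-2 * u^2))]
  exact integral_gaussian_Ioi 2

lemma half_gauss_Iic (a : ℝ) : ∫ u in Iic a, Real.exp (-2 * (u - a)^2) = √(π/2)/2 := by
  rw [shift_Iic a (fun u => Real.exp (-2 * u^2))]
  have := integral_comp_neg_Iic (0:ℝ) (fun u => Real.exp (-2 * u^2))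
  simp only [neg_sq, neg_zero] at this
  rw [this]
  exact integral_gaussian_Ioi 2

lemma sqrt_two_pi_eq : Real.sqrt (2*π) = 2 * Real.sqrt (π/2) := by
  rw [show (2:ℝ)*π = 2^2*(π/2) by ring, Real.sqrt_mul (by positivity), Real.sqrt_sq (by norm_num)]

lemma integrable_shift_gauss (a : ℝ) : Integrable (fun u : ℝ => Real.exp (-2 * (u - a)^2)) := by
  exact (integrable_exp_neg_mul_sq (by norm_num : (0:ℝ) < 2)).comp_sub_right a

/-- central lower bound, Ioi version -/
lemma gauss_central_Ioi (m a : ℝ) :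
    4⁻¹ * Real.exp (-(2*(m-a)^2/3)) ≤ ∫ u in Ioi a, gaussianPDFReal m 1 u := by
  have hπ : (0:ℝ) < π := Real.pi_pos
  have key : ∀ u : ℝ, (√(2*π))⁻¹ * Real.exp (-(2*(m-a)^2/3)) * Real.exp (-2 * (u - a)^2)
      ≤ gaussianPDFReal m 1 u := by
    intro u
    simp only [gaussianPDFReal, NNReal.coe_one, mul_one]
    calc (√(2*π))⁻¹ * rexp (-(2*(m-a)^2/3)) * rexp (-2*(u-a)^2)
        = (√(2*π))⁻¹ * rexp (-(2*(m-a)^2/3) + -2*(u-a)^2) := by rw [Real.exp_add]; ring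
      _ ≤ (√(2*π))⁻¹ * rexp (-(u-m)^2/2) := by
          refine mul_le_mul_of_nonneg_left ?_ (by positivity)
          rw [Real.exp_le_exp]
          nlinarith [sq_nonneg (u - m - (4/3)*(a - m))]
  have hInt : ∀ s : Set ℝ, MeasurableSet s →
      ∫ u in s, (√(2*π))⁻¹ * Real.exp (-(2*(m-a)^2/3)) * Real.exp (-2 * (u - a)^2)
        ≤ ∫ u in s, gaussianPDFReal m 1 u := by
    intro s hs
    refine setIntegral_mono_on ?_ ?_ hs fun u _ => key u
    · exact (((integrable_shift_gauss a).const_mul _)).integrableOn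
    · exact (integrable_gaussianPDFReal m 1).integrableOn
  refine le_trans (le_of_eq ?_) (hInt (Ioi a) measurableSet_Ioi)
  rw [integral_const_mul, half_gauss_Ioi]
  rw [sqrt_two_pi_eq]
  have h0 : Real.sqrt (π/2) ≠ 0 := by positivity
  field_simp
  ring

lemma gauss_central_Iic (m a : ℝ) :
    4⁻¹ * Real.exp (-(2*(m-a)^2/3)) ≤ ∫ u in Iic a, gaussianPDFReal m 1 u := by
  have key : ∀ u : ℝ, (√(2*π))⁻¹ * Real.exp (-(2*(m-a)^2/3)) * Real.exp (-2 * (u - a)^2)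
      ≤ gaussianPDFReal m 1 u := by
    intro u
    simp only [gaussianPDFReal, NNReal.coe_one, mul_one]
    calc (√(2*π))⁻¹ * rexp (-(2*(m-a)^2/3)) * rexp (-2*(u-a)^2)
        = (√(2*π))⁻¹ * rexp (-(2*(m-a)^2/3) + -2*(u-a)^2) := by rw [Real.exp_add]; ring
      _ ≤ (√(2*π))⁻¹ * rexp (-(u-m)^2/2) := by
          refine mul_le_mul_of_nonneg_left ?_ (by positivity)
          rw [Real.exp_le_exp]
          nlinarith [sq_nonneg (u - m - (4/3)*(a - m))]
  have hInt : ∫ u in Iic a, (√(2*π))⁻¹ * Real.exp (-(2*(m-a)^2/3)) * Real.exp (-2 * (u - a)^2)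
        ≤ ∫ u in Iic a, gaussianPDFReal m 1 u := by
    refine setIntegral_mono_on ?_ ?_ measurableSet_Iic fun u _ => key u
    · exact (((integrable_shift_gauss a).const_mul _)).integrableOn
    · exact (integrable_gaussianPDFReal m 1).integrableOn
  refine le_trans (le_of_eq ?_) hInt
  rw [integral_const_mul, half_gauss_Iic]
  rw [sqrt_two_pi_eq]
  have h0 : Real.sqrt (π/2) ≠ 0 := by positivity
  field_simp
  ring

/-- Total variation distance between two measures on ℝ. -/
noncomputable def dTV (P Q : Measure ℝ) : ℝ :=
  ⨆ s : {s : Set ℝ // MeasurableSet s}, |(P s.1).toReal - (Q s.1).toReal|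

instance : Nonempty {s : Set ℝ // MeasurableSet s} := ⟨⟨∅, MeasurableSet.empty⟩⟩

lemma dTV_bddAbove (P Q : Measure ℝ) [IsProbabilityMeasure P] [IsProbabilityMeasure Q] :
    BddAbove (Set.range fun s : {s : Set ℝ // MeasurableSet s} =>
      |(P s.1).toReal - (Q s.1).toReal|) := by
  refine ⟨1, ?_⟩
  rintro x ⟨s, rfl⟩
  have hP : (P s.1).toReal ≤ 1 := by
    have := ENNReal.toReal_mono ENNReal.one_ne_top (prob_le_one (μ := P) (s := s.1))
    simpa using this
  have hQ : (Q s.1).toReal ≤ 1 := by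
    have := ENNReal.toReal_mono ENNReal.one_ne_top (prob_le_one (μ := Q) (s := s.1))
    simpa using this
  have h0P : 0 ≤ (P s.1).toReal := ENNReal.toReal_nonneg
  have h0Q : 0 ≤ (Q s.1).toReal := ENNReal.toReal_nonneg
  rw [abs_le]; constructor <;> linarith

lemma dTV_comm (P Q : Measure ℝ) : dTV P Q = dTV Q P := by
  unfold dTV
  exact iSup_congr fun s => abs_sub_comm _ _

/-- Gaussian tail bound, Iic version. -/
lemma gauss_tail_Iic {σ : ℝ} (hσ : 0 < σ) (m : ℝ) {t : ℝ} (ht : 0 ≤ t) :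
    ∫ u in Iic (m - t), gaussianPDFReal m (Real.toNNReal (σ^2)) u
      ≤ Real.exp (-t^2/(2*σ^2)) := by
  set v : ℝ≥0 := Real.toNNReal (σ^2) with hv
  have hvc : (v:ℝ) = σ^2 := Real.coe_toNNReal _ (sq_nonneg σ)
  have hv2 : (0:ℝ) < 2 * v := by rw [hvc]; positivity
  have key : ∀ u ∈ Iic (m - t),
      gaussianPDFReal m v u ≤ Real.exp (-t^2/(2*σ^2)) * gaussianPDFReal (m - t) v u := by
    intro u hu
    simp only [mem_Iic] at hu
    simp only [gaussianPDFReal]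
    have h2 : rexp (-(u - m)^2 / (2*(v:ℝ))) ≤
        rexp (-(u - (m - t))^2 / (2*(v:ℝ))) * rexp (-t^2/(2*σ^2)) := by
      rw [← Real.exp_add, Real.exp_le_exp, hvc]
      have h1 : -(u - m)^2 / (2*σ^2) ≤ (-(u - (m - t))^2 + -t^2) / (2*σ^2) := by
        apply div_le_div_of_nonneg_right ?_ (by positivity)
        · nlinarith [mul_nonneg ht (sub_nonneg.2 hu)]
      calc -(u - m)^2 / (2*σ^2) ≤ (-(u - (m - t))^2 + -t^2) / (2*σ^2) := h1
        _ = -(u - (m - t))^2 / (2*σ^2) + -t^2/(2*σ^2) := by ring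
    calc (√(2*π*(v:ℝ)))⁻¹ * rexp (-(u - m)^2 / (2*(v:ℝ)))
        ≤ (√(2*π*(v:ℝ)))⁻¹ * (rexp (-(u - (m - t))^2 / (2*(v:ℝ))) * rexp (-t^2/(2*σ^2))) :=
          mul_le_mul_of_nonneg_left h2 (by positivity)
      _ = rexp (-t^2/(2*σ^2)) * ((√(2*π*(v:ℝ)))⁻¹ * rexp (-(u - (m - t))^2 / (2*(v:ℝ)))) := by
          ring
  have hvne : v ≠ 0 := by
    rw [hv]
    exact ne_of_gt (Real.toNNReal_pos.2 (by positivity))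
  calc ∫ u in Iic (m - t), gaussianPDFReal m v u
      ≤ ∫ u in Iic (m - t), Real.exp (-t^2/(2*σ^2)) * gaussianPDFReal (m - t) v u := by
        refine setIntegral_mono_on ?_ ?_ measurableSet_Iic key
        · exact (integrable_gaussianPDFReal m v).integrableOn
        · exact ((integrable_gaussianPDFReal (m - t) v).const_mul _).integrableOn
    _ = Real.exp (-t^2/(2*σ^2)) * ∫ u in Iic (m - t), gaussianPDFReal (m - t) v u :=
        integral_const_mul _ _
    _ ≤ Real.exp (-t^2/(2*σ^2)) * 1 := by
        refine mul_le_mul_of_nonneg_left ?_ (Real.exp_nonneg _)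
        rw [← integral_gaussianPDFReal_eq_one (m - t) hvne]
        refine setIntegral_le_integral (integrable_gaussianPDFReal _ _)
          (ae_of_all _ fun x => gaussianPDFReal_nonneg _ _ x)
    _ = Real.exp (-t^2/(2*σ^2)) := mul_one _

/-- Gaussian tail bound, Ioi version. -/
lemma gauss_tail_Ioi {σ : ℝ} (hσ : 0 < σ) (m : ℝ) {t : ℝ} (ht : 0 ≤ t) :
    ∫ u in Ioi (m + t), gaussianPDFReal m (Real.toNNReal (σ^2)) u
      ≤ Real.exp (-t^2/(2*σ^2)) := by
  set v : ℝ≥0 := Real.toNNReal (σ^2) with hv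
  have hvc : (v:ℝ) = σ^2 := Real.coe_toNNReal _ (sq_nonneg σ)
  have key : ∀ u ∈ Ioi (m + t),
      gaussianPDFReal m v u ≤ Real.exp (-t^2/(2*σ^2)) * gaussianPDFReal (m + t) v u := by
    intro u hu
    simp only [mem_Ioi] at hu
    simp only [gaussianPDFReal]
    have h2 : rexp (-(u - m)^2 / (2*(v:ℝ))) ≤
        rexp (-(u - (m + t))^2 / (2*(v:ℝ))) * rexp (-t^2/(2*σ^2)) := by
      rw [← Real.exp_add, Real.exp_le_exp, hvc]
      have h1 : -(u - m)^2 / (2*σ^2) ≤ (-(u - (m + t))^2 + -t^2) / (2*σ^2) := by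
        apply div_le_div_of_nonneg_right ?_ (by positivity)
        · nlinarith [mul_nonneg ht (sub_nonneg.2 hu.le)]
      calc -(u - m)^2 / (2*σ^2) ≤ (-(u - (m + t))^2 + -t^2) / (2*σ^2) := h1
        _ = -(u - (m + t))^2 / (2*σ^2) + -t^2/(2*σ^2) := by ring
    calc (√(2*π*(v:ℝ)))⁻¹ * rexp (-(u - m)^2 / (2*(v:ℝ)))
        ≤ (√(2*π*(v:ℝ)))⁻¹ * (rexp (-(u - (m + t))^2 / (2*(v:ℝ))) * rexp (-t^2/(2*σ^2))) :=
          mul_le_mul_of_nonneg_left h2 (by positivity)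
      _ = rexp (-t^2/(2*σ^2)) * ((√(2*π*(v:ℝ)))⁻¹ * rexp (-(u - (m + t))^2 / (2*(v:ℝ)))) := by
          ring
  have hvne : v ≠ 0 := by
    rw [hv]
    exact ne_of_gt (Real.toNNReal_pos.2 (by positivity))
  calc ∫ u in Ioi (m + t), gaussianPDFReal m v u
      ≤ ∫ u in Ioi (m + t), Real.exp (-t^2/(2*σ^2)) * gaussianPDFReal (m + t) v u := by
        refine setIntegral_mono_on ?_ ?_ measurableSet_Ioi key
        · exact (integrable_gaussianPDFReal m v).integrableOn
        · exact ((integrable_gaussianPDFReal (m + t) v).const_mul _).integrableOn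
    _ = Real.exp (-t^2/(2*σ^2)) * ∫ u in Ioi (m + t), gaussianPDFReal (m + t) v u :=
        integral_const_mul _ _
    _ ≤ Real.exp (-t^2/(2*σ^2)) * 1 := by
        refine mul_le_mul_of_nonneg_left ?_ (Real.exp_nonneg _)
        rw [← integral_gaussianPDFReal_eq_one (m + t) hvne]
        refine setIntegral_le_integral (integrable_gaussianPDFReal _ _)
          (ae_of_all _ fun x => gaussianPDFReal_nonneg _ _ x)
    _ = Real.exp (-t^2/(2*σ^2)) := mul_one _

lemma dTV_ge {σ : ℝ} (hσ : 0 < σ) {θ₁ θ₂ : ℝ} (h12 : θ₁ ≤ θ₂) :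
    1 - 2 * Real.exp (-((θ₂-θ₁)/2)^2/(2*σ^2)) ≤
      dTV (gaussianReal θ₁ (Real.toNNReal (σ^2))) (gaussianReal θ₂ (Real.toNNReal (σ^2))) := by
  set v := Real.toNNReal (σ^2) with hvdef
  have hvne : v ≠ 0 := ne_of_gt (Real.toNNReal_pos.2 (by positivity))
  set t := (θ₂-θ₁)/2 with htdef
  have ht : 0 ≤ t := by rw [htdef]; linarith
  set m := θ₁ + t with hmdef
  have hm2 : θ₂ - t = m := by rw [hmdef, htdef]; ring
  have hP : 1 - Real.exp (-t^2/(2*σ^2)) ≤ ∫ u in Iic m, gaussianPDFReal θ₁ v u := by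
    have hsplit : (∫ u in Iic m, gaussianPDFReal θ₁ v u)
        + ∫ u in Ioi m, gaussianPDFReal θ₁ v u = 1 := by
      have h := setIntegral_union (Set.Iic_disjoint_Ioi (le_refl m)) measurableSet_Ioi
        ((integrable_gaussianPDFReal θ₁ v).integrableOn)
        ((integrable_gaussianPDFReal θ₁ v).integrableOn)
      rw [Set.Iic_union_Ioi, setIntegral_univ, integral_gaussianPDFReal_eq_one θ₁ hvne] at h
      exact h.symm
    have htail := gauss_tail_Ioi hσ θ₁ ht
    rw [← hmdef] at htail
    linarith
  have hQ : ∫ u in Iic m, gaussianPDFReal θ₂ v u ≤ Real.exp (-t^2/(2*σ^2)) := by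
    have htail := gauss_tail_Iic hσ θ₂ ht
    rw [hm2] at htail
    exact htail
  have hterm : 1 - 2 * Real.exp (-t^2/(2*σ^2)) ≤
      |((gaussianReal θ₁ v) (Iic m)).toReal - ((gaussianReal θ₂ v) (Iic m)).toReal| := by
    rw [gauss_toReal _ hvne, gauss_toReal _ hvne]
    refine le_trans ?_ (le_abs_self _)
    linarith
  refine le_trans hterm ?_
  unfold dTV
  exact le_ciSup (dTV_bddAbove _ _) ⟨Iic m, measurableSet_Iic⟩

lemma witness_dTV {Δ : ℝ} (hΔ : 0 ≤ Δ) {c : ℝ}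
    (hc : 1 - 2 * (4⁻¹ * Real.exp (-(2*(Δ/2)^2/3))) ≤ c) :
    dTV (gaussianReal 0 1) (gaussianReal Δ 1) ≤ c := by
  have h1 : (1:ℝ≥0) ≠ 0 := one_ne_zero
  set x₀ := Δ/2 with hx₀
  set p := gaussianPDFReal 0 1 with hpdef
  set q := gaussianPDFReal Δ 1 with hqdef
  have hp : Integrable p volume := integrable_gaussianPDFReal 0 1
  have hq : Integrable q volume := integrable_gaussianPDFReal Δ 1
  have hpq : Integrable (fun u => p u - q u) volume := hp.sub hq
  have hqp : Integrable (fun u => q u - p u) volume := hq.sub hp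
  have hge : ∀ u ∈ Iic x₀, 0 ≤ p u - q u := by
    intro u hu
    simp only [mem_Iic] at hu
    rw [hpdef, hqdef]
    simp only [gaussianPDFReal, NNReal.coe_one, mul_one, sub_zero]
    rw [sub_nonneg]
    refine mul_le_mul_of_nonneg_left ?_ (by positivity)
    rw [Real.exp_le_exp]
    have h2u : 0 ≤ Δ - 2*u := by rw [hx₀] at hu; linarith
    nlinarith [mul_nonneg hΔ h2u]
  have hle : ∀ u ∈ Ioi x₀, 0 ≤ q u - p u := by
    intro u hu
    simp only [mem_Ioi] at hu
    rw [hpdef, hqdef]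
    simp only [gaussianPDFReal, NNReal.coe_one, mul_one, sub_zero]
    rw [sub_nonneg]
    refine mul_le_mul_of_nonneg_left ?_ (by positivity)
    rw [Real.exp_le_exp]
    have h2u : 0 ≤ 2*u - Δ := by rw [hx₀] at hu; linarith
    nlinarith [mul_nonneg hΔ h2u]
  have splitP : ∀ f : ℝ → ℝ, Integrable f volume →
      (∫ u in Iic x₀, f u) + ∫ u in Ioi x₀, f u = ∫ u, f u := by
    intro f hf
    have h := setIntegral_union (Set.Iic_disjoint_Ioi (le_refl x₀)) measurableSet_Ioi
      hf.integrableOn hf.integrableOn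
    rw [Set.Iic_union_Ioi, setIntegral_univ] at h
    exact h.symm
  have hT₁ := gauss_central_Ioi 0 x₀
  have hT₂ := gauss_central_Iic Δ x₀
  have he₁ : (0 - x₀)^2 = (Δ/2)^2 := by rw [hx₀]; ring
  have he₂ : (Δ - x₀)^2 = (Δ/2)^2 := by rw [hx₀]; ring
  rw [he₁] at hT₁
  rw [he₂] at hT₂
  set T₁ := ∫ u in Ioi x₀, p u with hT₁def
  set T₂ := ∫ u in Iic x₀, q u with hT₂def
  have eA : ∫ u in Iic x₀, (p u - q u) = 1 - T₁ - T₂ := by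
    rw [integral_sub hp.integrableOn hq.integrableOn]
    have h := splitP p hp
    rw [hpdef, integral_gaussianPDFReal_eq_one 0 h1] at h
    rw [← hpdef] at h
    rw [hT₁def, hT₂def]
    linarith
  have eB : ∫ u in Ioi x₀, (q u - p u) = 1 - T₁ - T₂ := by
    rw [integral_sub hq.integrableOn hp.integrableOn]
    have h := splitP q hq
    rw [hqdef, integral_gaussianPDFReal_eq_one Δ h1] at h
    rw [← hqdef] at h
    rw [hT₁def, hT₂def]
    linarith
  have hbound : 1 - T₁ - T₂ ≤ c := by
    have := Real.exp_nonneg (-(2*(Δ/2)^2/3))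
    linarith
  -- now per-set bound
  unfold dTV
  refine ciSup_le fun s => ?_
  rw [gauss_toReal 0 h1, gauss_toReal Δ h1, ← hpdef, ← hqdef]
  have hdisj : Disjoint (s.1 ∩ Iic x₀) (s.1 ∩ Ioi x₀) :=
    Disjoint.mono Set.inter_subset_right Set.inter_subset_right
      (Set.Iic_disjoint_Ioi (le_refl x₀))
  have hseq : s.1 ∩ Iic x₀ ∪ s.1 ∩ Ioi x₀ = s.1 := by
    rw [← Set.inter_union_distrib_left, Set.Iic_union_Ioi, Set.inter_univ]
  have claim : ∀ f : ℝ → ℝ, Integrable f volume →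
      (∀ u ∈ Iic x₀, 0 ≤ f u) → (∀ u ∈ Ioi x₀, f u ≤ 0) →
      ∫ u in s.1, f u ≤ ∫ u in Iic x₀, f u := by
    intro f hf hf1 hf2
    have hsp : ∫ u in s.1, f u
        = (∫ u in s.1 ∩ Iic x₀, f u) + ∫ u in s.1 ∩ Ioi x₀, f u := by
      rw [← setIntegral_union hdisj (s.2.inter measurableSet_Ioi)
        hf.integrableOn hf.integrableOn, hseq]
    rw [hsp]
    have hle1 : ∫ u in s.1 ∩ Iic x₀, f u ≤ ∫ u in Iic x₀, f u := by
      refine setIntegral_mono_set hf.integrableOn ?_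
        (HasSubset.Subset.eventuallyLE Set.inter_subset_right)
      exact (ae_restrict_iff' measurableSet_Iic).2 (ae_of_all _ fun u hu => hf1 u hu)
    have hle2 : ∫ u in s.1 ∩ Ioi x₀, f u ≤ 0 :=
      setIntegral_nonpos (s.2.inter measurableSet_Ioi) fun u hu => hf2 u hu.2
    linarith
  have hA : (∫ u in s.1, p u) - ∫ u in s.1, q u ≤ c := by
    rw [← integral_sub hp.integrableOn hq.integrableOn]
    refine le_trans (claim _ hpq hge fun u hu => ?_) (by rw [eA]; exact hbound)
    have := hle u hu; linarith
  have hB : (∫ u in s.1, q u) - ∫ u in s.1, p u ≤ c := by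
    rw [← integral_sub hq.integrableOn hp.integrableOn]
    have claim' : ∀ f : ℝ → ℝ, Integrable f volume →
        (∀ u ∈ Ioi x₀, 0 ≤ f u) → (∀ u ∈ Iic x₀, f u ≤ 0) →
        ∫ u in s.1, f u ≤ ∫ u in Ioi x₀, f u := by
      intro f hf hf1 hf2
      have hsp : ∫ u in s.1, f u
          = (∫ u in s.1 ∩ Iic x₀, f u) + ∫ u in s.1 ∩ Ioi x₀, f u := by
        rw [← setIntegral_union hdisj (s.2.inter measurableSet_Ioi)
          hf.integrableOn hf.integrableOn, hseq]
      rw [hsp]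
      have hle1 : ∫ u in s.1 ∩ Ioi x₀, f u ≤ ∫ u in Ioi x₀, f u := by
        refine setIntegral_mono_set hf.integrableOn ?_
          (HasSubset.Subset.eventuallyLE Set.inter_subset_right)
        exact (ae_restrict_iff' measurableSet_Ioi).2 (ae_of_all _ fun u hu => hf1 u hu)
      have hle2 : ∫ u in s.1 ∩ Iic x₀, f u ≤ 0 :=
        setIntegral_nonpos (s.2.inter measurableSet_Iic) fun u hu => hf2 u hu.2
      linarith
    refine le_trans (claim' _ hqp hle fun u hu => ?_) (by rw [eB]; exact hbound)
    have := hge u hu; linarith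
  rw [abs_le]
  constructor <;> linarith

/-- The modulus of continuity
`ω(ε) = sup{|θ₁ − θ₂|/σ : dTV(N(θ₁,σ²), N(θ₂,σ²)) ≤ ε/(1−ε)}`. -/
noncomputable def modCont (ε : ℝ) : ℝ :=
  sSup {r : ℝ | ∃ θ₁ θ₂ σ : ℝ, 0 < σ ∧ r = |θ₁ - θ₂| / σ ∧
    dTV (gaussianReal θ₁ (Real.toNNReal (σ ^ 2))) (gaussianReal θ₂ (Real.toNNReal (σ ^ 2)))
      ≤ ε / (1 - ε)}

/-- Proposition: for `ε ∈ [1/3, 1/2)`, `ω(ε) ≥ √(2 log((1−ε)/(2(1−2ε))))`. -/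
theorem statement17 (ε : ℝ) (h1 : 1 / 3 ≤ ε) (h2 : ε < 1 / 2) :
    Real.sqrt (2 * Real.log ((1 - ε) / (2 * (1 - 2 * ε)))) ≤ modCont ε := by
  have hε1 : (0:ℝ) < 1 - ε := by linarith
  have hε2 : (0:ℝ) < 1 - 2*ε := by linarith
  set L := Real.log ((1 - ε) / (2 * (1 - 2 * ε))) with hLdef
  have hL : 0 ≤ L := Real.log_nonneg (by rw [le_div_iff₀ (by linarith)]; linarith)
  set Δ := Real.sqrt (2 * L) with hΔdef
  have hΔ0 : 0 ≤ Δ := Real.sqrt_nonneg _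
  have hΔsq : Δ^2 = 2*L := Real.sq_sqrt (by linarith)
  have hexp : Real.exp (-L) = 2 * (1 - 2*ε) / (1 - ε) := by
    rw [hLdef, ← Real.log_inv, Real.exp_log (by positivity), inv_div]
  have hkey : 1 - 2 * (4⁻¹ * Real.exp (-(2*(Δ/2)^2/3))) ≤ ε / (1 - ε) := by
    have e1 : -(2*(Δ/2)^2/3) = -(L/3) := by
      have h4 : (Δ/2)^2 = Δ^2/4 := by ring
      rw [h4, hΔsq]; ring
    rw [e1]
    have e2 : Real.exp (-L) ≤ Real.exp (-(L/3)) := Real.exp_le_exp.2 (by linarith)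
    have e3 : 1 - 2*(4⁻¹ * Real.exp (-L)) = ε/(1-ε) := by
      rw [hexp]; field_simp; ring
    linarith
  have hmem : Δ ∈ {r : ℝ | ∃ θ₁ θ₂ σ : ℝ, 0 < σ ∧ r = |θ₁ - θ₂| / σ ∧
      dTV (gaussianReal θ₁ (Real.toNNReal (σ ^ 2))) (gaussianReal θ₂ (Real.toNNReal (σ ^ 2)))
        ≤ ε / (1 - ε)} := by
    refine ⟨0, Δ, 1, one_pos, ?_, ?_⟩
    · rw [zero_sub, abs_neg, abs_of_nonneg hΔ0]; norm_num
    · have h11 : Real.toNNReal ((1:ℝ)^2) = 1 := by norm_num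
      rw [h11]
      exact witness_dTV hΔ0 hkey
  have hbdd : BddAbove {r : ℝ | ∃ θ₁ θ₂ σ : ℝ, 0 < σ ∧ r = |θ₁ - θ₂| / σ ∧
      dTV (gaussianReal θ₁ (Real.toNNReal (σ ^ 2))) (gaussianReal θ₂ (Real.toNNReal (σ ^ 2)))
        ≤ ε / (1 - ε)} := by
    refine ⟨Real.sqrt (8 * Real.log (2 * (1-ε) / (1-2*ε))), ?_⟩
    rintro r ⟨θ₁, θ₂, σ, hσ, hr, hd⟩
    have hlow : 1 - 2 * Real.exp (-(|θ₁-θ₂|/2)^2/(2*σ^2)) ≤ ε / (1-ε) := by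
      rcases le_total θ₁ θ₂ with h12 | h12
      · have hdg := dTV_ge hσ h12
        rw [abs_sub_comm, abs_of_nonneg (by linarith : (0:ℝ) ≤ θ₂ - θ₁)]
        exact le_trans hdg hd
      · have hdg := dTV_ge hσ h12
        rw [dTV_comm] at hd
        rw [abs_of_nonneg (by linarith : (0:ℝ) ≤ θ₁ - θ₂)]
        exact le_trans hdg hd
    set E := Real.exp (-(|θ₁-θ₂|/2)^2/(2*σ^2)) with hEdef
    have hid : ε/(1-ε) = 1 - (1-2*ε)/(1-ε) := by field_simp; ring
    have hid2 : (1-2*ε)/(2*(1-ε)) = ((1-2*ε)/(1-ε))/2 := by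
      rw [div_div]; ring_nf
    have hEge : (1-2*ε)/(2*(1-ε)) ≤ E := by
      rw [hid2]; linarith [hlow, hid]
    have hlog : Real.log ((1-2*ε)/(2*(1-ε))) ≤ -(|θ₁-θ₂|/2)^2/(2*σ^2) := by
      have hh := Real.log_le_log (by positivity) hEge
      rwa [hEdef, Real.log_exp] at hh
    have hM : (|θ₁-θ₂|/2)^2/(2*σ^2) ≤ Real.log (2*(1-ε)/(1-2*ε)) := by
      have hinv : Real.log (2*(1-ε)/(1-2*ε)) = - Real.log ((1-2*ε)/(2*(1-ε))) := by
        rw [← Real.log_inv]; congr 1; rw [inv_div]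
      have hnd : -(|θ₁-θ₂|/2)^2/(2*σ^2) = -((|θ₁-θ₂|/2)^2/(2*σ^2)) := neg_div _ _
      rw [hnd] at hlog
      linarith
    have hlogpos : 0 ≤ Real.log (2*(1-ε)/(1-2*ε)) :=
      Real.log_nonneg (by rw [le_div_iff₀ (by linarith)]; linarith)
    rw [hr, Real.le_sqrt (by positivity) (by nlinarith [hlogpos])]
    have hσ2 : (0:ℝ) < σ^2 := by positivity
    have habs : (|θ₁-θ₂|/σ)^2 = 8 * ((|θ₁-θ₂|/2)^2/(2*σ^2)) := by
      field_simp; ring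
    rw [habs]
    linarith
  unfold modCont
  exact le_csSup hbdd hmem
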